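/- Under the hypotheses of the previous lemma (weighted degenerate elliptic problem on (−1,1)), the maximum principle holds: if f ≤ 0 almost everywhere then the unique weak solution g satisfies g ≤ 0 almost everywhere, and if f ≥ 0 a.e. then g ≥ 0 a.e. -/

import Mathlib

open MeasureTheory Set Real

/-- Membership in the weighted space `V`. -/
def InWeightedV (g g' : ℝ → ℝ) : Prop :=
  (∀ μ ∈ Set.Ioo (-1:ℝ) 1, HasDerivAt g (g' μ) μ) ∧
  MeasureTheory.IntegrableOn (fun μ => g μ ^ 2 / (1 - μ ^ 2)) (Set.Ioo (-1) 1) ∧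
  MeasureTheory.IntegrableOn (fun μ => (1 - μ ^ 2) * g' μ ^ 2) (Set.Ioo (-1) 1)

/-- Weak solution of `−(1−μ²)∂_μ(e^{σ/d}(1−μ²)∂_μ g) + α g = f` on `(−1,1)`. -/
def IsWeakSol (σ : ℝ → ℝ) (d : ℝ) (α f g g' : ℝ → ℝ) : Prop :=
  InWeightedV g g' ∧
  ∀ v v' : ℝ → ℝ, InWeightedV v v' →
    (∫ μ in Set.Ioo (-1:ℝ) 1, Real.exp (σ μ / d) * (1 - μ ^ 2) * g' μ * v' μ)
      + (∫ μ in Set.Ioo (-1:ℝ) 1, α μ * g μ * v μ / (1 - μ ^ 2))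
      = ∫ μ in Set.Ioo (-1:ℝ) 1, f μ * v μ / (1 - μ ^ 2)

noncomputable def phi (t : ℝ) : ℝ := Real.sqrt ((max t 0)^2 + 1) - 1
noncomputable def phiD (t : ℝ) : ℝ := max t 0 / Real.sqrt ((max t 0)^2 + 1)

lemma hasDerivAt_maxsq (t : ℝ) : HasDerivAt (fun s => (max s 0)^2) (2 * max t 0) t := by
  rcases lt_trichotomy t 0 with h | h | h
  · have heq : (fun s : ℝ => (max s 0)^2) =ᶠ[nhds t] fun _ => (0:ℝ) := by
      filter_upwards [eventually_lt_nhds h] with s hs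
      simp [max_eq_right hs.le]
    rw [max_eq_right h.le]
    simpa using (hasDerivAt_const t (0:ℝ)).congr_of_eventuallyEq heq
  · subst h
    rw [hasDerivAt_iff_isLittleO]
    simp only [max_self, mul_zero, smul_zero, sub_zero]
    have h1 : (fun s : ℝ => (max s 0)^2) =O[nhds 0] fun s => s * s := by
      apply Asymptotics.IsBigO.of_bound 1
      filter_upwards with s
      simp only [one_mul, norm_pow, Real.norm_eq_abs, sq_abs, abs_mul]
      rcases le_or_gt s 0 with hs | hs
      · simp [max_eq_right hs]
        exact mul_self_nonneg s
      · simp [max_eq_left hs.le, sq, abs_of_pos hs]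
    have h2 : (fun s : ℝ => s * s) =o[nhds 0] fun s => s - 0 := by
      simpa using (Asymptotics.isLittleO_id_one (E'' := ℝ) (F'' := ℝ)).mul_isBigO
        (Asymptotics.isBigO_refl (fun s : ℝ => s) (nhds 0))
    simpa using h1.trans_isLittleO h2
  · have heq : (fun s : ℝ => (max s 0)^2) =ᶠ[nhds t] fun s => s^2 := by
      filter_upwards [eventually_gt_nhds h] with s hs
      simp [max_eq_left hs.le]
    rw [max_eq_left h.le]
    have h2 : HasDerivAt (fun s : ℝ => s ^ 2) (2 * t) t := by
      simpa [mul_comm] using hasDerivAt_pow 2 t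
    exact h2.congr_of_eventuallyEq heq

lemma hasDerivAt_phi (t : ℝ) : HasDerivAt phi (phiD t) t := by
  have hpos : (max t 0)^2 + 1 ≠ 0 := by positivity
  have h1 := (Real.hasDerivAt_sqrt hpos).comp t ((hasDerivAt_maxsq t).add_const 1)
  have h2 : HasDerivAt phi (1 / (2 * Real.sqrt ((max t 0)^2 + 1)) * (2 * max t 0)) t := by
    unfold phi
    exact h1.sub_const 1
  convert h2 using 1
  unfold phiD
  have hs : Real.sqrt ((max t 0)^2 + 1) > 0 := Real.sqrt_pos.2 (by positivity)
  field_simp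

lemma phi_nonneg (t : ℝ) : 0 ≤ phi t := by
  unfold phi
  have : (1:ℝ) ≤ Real.sqrt ((max t 0)^2 + 1) := by
    have h := Real.sqrt_le_sqrt (show (1:ℝ) ≤ (max t 0)^2+1 by nlinarith [sq_nonneg (max t 0)])
    simpa using h
  linarith

lemma phi_le_abs (t : ℝ) : phi t ≤ |t| := by
  unfold phi
  have ha : (0:ℝ) ≤ max t 0 := le_max_right t 0
  have h : Real.sqrt ((max t 0)^2 + 1) ≤ max t 0 + 1 := by
    calc Real.sqrt ((max t 0)^2 + 1) ≤ Real.sqrt ((max t 0 + 1)^2) :=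
          Real.sqrt_le_sqrt (by nlinarith)
      _ = max t 0 + 1 := Real.sqrt_sq (by linarith)
  have : max t 0 ≤ |t| := max_le (le_abs_self t) (abs_nonneg t)
  linarith

lemma phiD_nonneg (t : ℝ) : 0 ≤ phiD t := by
  unfold phiD
  have ha : (0:ℝ) ≤ max t 0 := le_max_right t 0
  positivity

lemma phiD_le_one (t : ℝ) : phiD t ≤ 1 := by
  unfold phiD
  rw [div_le_one (Real.sqrt_pos.2 (by positivity))]
  calc max t 0 ≤ Real.sqrt ((max t 0)^2) := by
        rw [Real.sqrt_sq (le_max_right t 0)]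
    _ ≤ _ := Real.sqrt_le_sqrt (by linarith)

lemma mul_phi_nonneg (t : ℝ) : 0 ≤ t * phi t := by
  rcases le_or_gt t 0 with h | h
  · have : phi t = 0 := by unfold phi; simp [max_eq_right h]
    simp [this]
  · exact mul_nonneg h.le (phi_nonneg t)

lemma nonpos_of_mul_phi_eq_zero {t : ℝ} (h : t * phi t = 0) : t ≤ 0 := by
  by_contra hc
  push_neg at hc
  have hph : 0 < phi t := by
    unfold phi
    have h1 : (1:ℝ) < Real.sqrt ((max t 0)^2 + 1) := by
      rw [Real.lt_sqrt (by norm_num)]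
      have : 0 < max t 0 := lt_max_of_lt_left hc
      nlinarith
    linarith
  nlinarith

lemma continuous_phiD : Continuous phiD := by
  unfold phiD
  apply Continuous.div
  · exact continuous_id.max continuous_const
  · exact Real.continuous_sqrt.comp (((continuous_id.max continuous_const).pow 2).add continuous_const)
  · intro t
    exact ne_of_gt (Real.sqrt_pos.2 (by positivity))

lemma continuous_phi : Continuous phi := by
  unfold phi
  have : Continuous fun t : ℝ => (max t 0)^2 + 1 :=
    ((continuous_id.max continuous_const).pow 2).add continuous_const
  exact (Real.continuous_sqrt.comp this).sub continuous_const

lemma key_max_principle (σ : ℝ → ℝ) (d α₀ : ℝ) (hα₀ : 0 < α₀)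
    (α : ℝ → ℝ) (hα_meas : Measurable α)
    (hα_bdd : ∃ Cb : ℝ, ∀ᵐ μ ∂(volume.restrict (Set.Ioo (-1:ℝ) 1)), |α μ| ≤ Cb)
    (f g g' : ℝ → ℝ) (hsol : IsWeakSol σ d α f g g')
    (hα_lb : ∀ᵐ μ ∂(volume.restrict (Set.Ioo (-1:ℝ) 1)), α₀ ≤ α μ)
    (hf_le : ∀ᵐ μ ∂(volume.restrict (Set.Ioo (-1:ℝ) 1)), f μ ≤ 0) :
    ∀ᵐ μ ∂(volume.restrict (Set.Ioo (-1:ℝ) 1)), g μ ≤ 0 := by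
  obtain ⟨⟨hder, hg2, hg'2⟩, hweak⟩ := hsol
  obtain ⟨Cb, hCb⟩ := hα_bdd
  set I : Set ℝ := Set.Ioo (-1:ℝ) 1 with hI
  have hIm : MeasurableSet I := measurableSet_Ioo
  have hmem : ∀ μ ∈ I, (0:ℝ) < 1 - μ^2 := by
    intro μ hμ
    obtain ⟨h1, h2⟩ := hμ
    nlinarith
  -- measurability of g and g'
  have hg_cont : ContinuousOn g I := fun μ hμ =>
    ((hder μ hμ).continuousAt).continuousWithinAt
  have hg_aem : AEMeasurable g (volume.restrict I) :=
    hg_cont.aemeasurable hIm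
  have hg'_aem : AEMeasurable g' (volume.restrict I) := by
    apply (measurable_deriv g).aemeasurable.congr
    filter_upwards [ae_restrict_mem hIm] with μ hμ
    exact ((hder μ hμ).deriv)
  -- the test function
  set v : ℝ → ℝ := fun μ => phi (g μ) with hv_def
  set v' : ℝ → ℝ := fun μ => phiD (g μ) * g' μ with hv'_def
  have hv_aem : AEMeasurable v (volume.restrict I) :=
    continuous_phi.measurable.comp_aemeasurable hg_aem
  have hvV : InWeightedV v v' := by
    refine ⟨fun μ hμ => (hasDerivAt_phi (g μ)).comp μ (hder μ hμ), ?_, ?_⟩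
    · refine MeasureTheory.Integrable.mono hg2 ?_ ?_
      · exact ((hv_aem.pow_const 2).div
          ((measurable_const.sub (measurable_id.pow_const 2)).aemeasurable)).aestronglyMeasurable
      · filter_upwards [ae_restrict_mem hIm] with μ hμ
        have hp := hmem μ hμ
        have h2 : phi (g μ)^2 ≤ g μ^2 := by
          nlinarith [phi_nonneg (g μ), phi_le_abs (g μ), abs_nonneg (g μ), sq_abs (g μ)]
        rw [Real.norm_eq_abs, Real.norm_eq_abs]
        have hle : v μ ^2 / (1-μ^2) ≤ g μ^2/(1-μ^2) := by
          apply div_le_div_of_nonneg_right h2 hp.le |>.trans_eq rfl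
        calc |v μ^2/(1-μ^2)| = v μ^2/(1-μ^2) := abs_of_nonneg (by positivity)
          _ ≤ g μ^2/(1-μ^2) := hle
          _ ≤ |g μ^2/(1-μ^2)| := le_abs_self _
    · refine MeasureTheory.Integrable.mono hg'2 ?_ ?_
      · apply AEMeasurable.aestronglyMeasurable
        apply AEMeasurable.mul
        · exact (measurable_const.sub (measurable_id.pow_const 2)).aemeasurable
        · exact ((continuous_phiD.measurable.comp_aemeasurable hg_aem).mul hg'_aem).pow_const 2
      · filter_upwards [ae_restrict_mem hIm] with μ hμ
        have hp := hmem μ hμ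
        have h1 : v' μ^2 ≤ g' μ^2 := by
          have := phiD_nonneg (g μ)
          have := phiD_le_one (g μ)
          have : phiD (g μ)^2 ≤ 1 := by nlinarith
          calc v' μ^2 = phiD (g μ)^2 * g' μ^2 := by rw [hv'_def]; ring
            _ ≤ 1 * g' μ^2 := by nlinarith [sq_nonneg (g' μ)]
            _ = g' μ^2 := one_mul _
        rw [Real.norm_eq_abs, Real.norm_eq_abs]
        calc |(1-μ^2) * v' μ^2| = (1-μ^2) * v' μ^2 := abs_of_nonneg (by positivity)
          _ ≤ (1-μ^2) * g' μ^2 := by nlinarith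
          _ ≤ |(1-μ^2) * g' μ^2| := le_abs_self _
  have hid := hweak v v' hvV
  -- A ≥ 0
  have hA : 0 ≤ ∫ μ in I, Real.exp (σ μ / d) * (1 - μ ^ 2) * g' μ * v' μ := by
    apply setIntegral_nonneg hIm
    intro μ hμ
    have hp := hmem μ hμ
    have h1 : g' μ * v' μ = phiD (g μ) * g' μ^2 := by rw [hv'_def]; ring
    have h2 : 0 ≤ g' μ * v' μ := by
      rw [h1]; exact mul_nonneg (phiD_nonneg _) (sq_nonneg _)
    have := Real.exp_pos (σ μ / d)
    calc (0:ℝ) = Real.exp (σ μ / d) * (1-μ^2) * 0 := by ring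
      _ ≤ Real.exp (σ μ / d) * (1-μ^2) * (g' μ * v' μ) := by
          apply mul_le_mul_of_nonneg_left h2 (by positivity)
      _ = Real.exp (σ μ / d) * (1-μ^2) * g' μ * v' μ := by ring
  -- C ≤ 0
  have hC : (∫ μ in I, f μ * v μ / (1 - μ ^ 2)) ≤ 0 := by
    apply integral_nonpos_of_ae
    filter_upwards [hf_le, ae_restrict_mem hIm] with μ hfμ hμ
    have hp := hmem μ hμ
    have hv0 : 0 ≤ v μ := phi_nonneg _
    have : f μ * v μ ≤ 0 := mul_nonpos_of_nonpos_of_nonneg hfμ hv0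
    exact div_nonpos_of_nonpos_of_nonneg this hp.le
  -- B is integrable
  have hb_int : IntegrableOn (fun μ => α μ * g μ * v μ / (1 - μ ^ 2)) I := by
    apply (hg2.const_mul Cb).mono
    · apply AEMeasurable.aestronglyMeasurable
      apply AEMeasurable.div
      · exact (hα_meas.aemeasurable.mul hg_aem).mul hv_aem
      · exact (measurable_const.sub (measurable_id.pow_const 2)).aemeasurable
    · filter_upwards [hCb, ae_restrict_mem hIm] with μ hαμ hμ
      have hp := hmem μ hμ
      have hgv : 0 ≤ g μ * v μ := mul_phi_nonneg (g μ)
      have hgv2 : g μ * v μ ≤ g μ^2 := by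
        nlinarith [phi_le_abs (g μ), phi_nonneg (g μ), le_abs_self (g μ), neg_abs_le (g μ), sq_abs (g μ)]
      have hCb0 : 0 ≤ Cb := (abs_nonneg _).trans hαμ
      rw [Real.norm_eq_abs, Real.norm_eq_abs, abs_div, abs_of_pos hp]
      calc |α μ * g μ * v μ| / (1-μ^2) = |α μ| * (g μ * v μ) / (1-μ^2) := by
            rw [mul_assoc, abs_mul, abs_of_nonneg hgv]
        _ ≤ Cb * g μ^2 / (1-μ^2) := by
            apply div_le_div_of_nonneg_right _ hp.le
            apply mul_le_mul hαμ hgv2 hgv hCb0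
        _ = Cb * (g μ^2 / (1-μ^2)) := by ring
        _ ≤ |Cb * (g μ^2/(1-μ^2))| := le_abs_self _
  -- B ≥ 0 pointwise a.e.
  have hb_ae : ∀ᵐ μ ∂(volume.restrict I), 0 ≤ α μ * g μ * v μ / (1 - μ ^ 2) := by
    filter_upwards [hα_lb, ae_restrict_mem hIm] with μ hαμ hμ
    have hp := hmem μ hμ
    have hgv : 0 ≤ g μ * v μ := mul_phi_nonneg (g μ)
    have : 0 ≤ α μ * g μ * v μ := by
      rw [mul_assoc]; exact mul_nonneg (le_trans hα₀.le hαμ) hgv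
    positivity
  -- conclude B = 0
  have hB_le : (∫ μ in I, α μ * g μ * v μ / (1 - μ ^ 2)) ≤ 0 := by linarith
  have hB_ge : 0 ≤ ∫ μ in I, α μ * g μ * v μ / (1 - μ ^ 2) :=
    integral_nonneg_of_ae hb_ae
  have hB0 : (∫ μ in I, α μ * g μ * v μ / (1 - μ ^ 2)) = 0 := le_antisymm hB_le hB_ge
  have hzero : (fun μ => α μ * g μ * v μ / (1 - μ ^ 2)) =ᵐ[volume.restrict I] 0 :=
    (integral_eq_zero_iff_of_nonneg_ae hb_ae hb_int).mp hB0
  filter_upwards [hzero, hα_lb, ae_restrict_mem hIm] with μ h0 hαμ hμ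
  have hp := hmem μ hμ
  have hα_pos : 0 < α μ := lt_of_lt_of_le hα₀ hαμ
  have h0' : α μ * g μ * phi (g μ) / (1 - μ^2) = 0 := h0
  have h1 : α μ * g μ * phi (g μ) = 0 :=
    (div_eq_zero_iff.mp h0').resolve_right (by intro h; linarith)
  have h2 : α μ * (g μ * phi (g μ)) = 0 := by rw [← mul_assoc]; exact h1
  rcases mul_eq_zero.mp h2 with h | h
  · exact absurd h (ne_of_gt hα_pos)
  · exact nonpos_of_mul_phi_eq_zero h

/-- Maximum principle for the degenerate elliptic problem: if `f ≤ 0` a.e. then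
the weak solution satisfies `g ≤ 0` a.e., and if `f ≥ 0` a.e. then `g ≥ 0` a.e. -/
theorem stmt11 (σ : ℝ → ℝ) (hσ : ContinuousOn σ (Set.Icc (-1) 1))
    (d α₀ : ℝ) (hd : 0 < d) (hα₀ : 0 < α₀)
    (α : ℝ → ℝ) (hα_meas : Measurable α)
    (hα_bdd : ∃ Cb : ℝ, ∀ᵐ μ ∂(volume.restrict (Set.Ioo (-1:ℝ) 1)), |α μ| ≤ Cb)
    (hα_lb : ∀ᵐ μ ∂(volume.restrict (Set.Ioo (-1:ℝ) 1)), α₀ ≤ α μ)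
    (f : ℝ → ℝ) (hf_meas : Measurable f)
    (hf : MeasureTheory.IntegrableOn (fun μ => f μ ^ 2 / (1 - μ ^ 2)) (Set.Ioo (-1) 1))
    (g g' : ℝ → ℝ) (hsol : IsWeakSol σ d α f g g') :
    ((∀ᵐ μ ∂(volume.restrict (Set.Ioo (-1:ℝ) 1)), f μ ≤ 0) →
      (∀ᵐ μ ∂(volume.restrict (Set.Ioo (-1:ℝ) 1)), g μ ≤ 0)) ∧
    ((∀ᵐ μ ∂(volume.restrict (Set.Ioo (-1:ℝ) 1)), 0 ≤ f μ) →
      (∀ᵐ μ ∂(volume.restrict (Set.Ioo (-1:ℝ) 1)), 0 ≤ g μ)) := by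
  constructor
  · exact fun hle => key_max_principle σ d α₀ hα₀ α hα_meas hα_bdd f g g' hsol hα_lb hle
  · intro hge
    have hneg : IsWeakSol σ d α (fun μ => -f μ) (fun μ => -g μ) (fun μ => -g' μ) := by
      obtain ⟨⟨hder, hg2, hg'2⟩, hweak⟩ := hsol
      refine ⟨⟨fun μ hμ => (hder μ hμ).neg, ?_, ?_⟩, ?_⟩
      · have he : (fun μ : ℝ => (-g μ)^2/(1-μ^2)) = fun μ => g μ^2/(1-μ^2) := by
          funext μ; rw [neg_sq]
        rw [he]; exact hg2
      · have he : (fun μ : ℝ => (1-μ^2) * (-g' μ)^2) = fun μ => (1-μ^2) * g' μ^2 := by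
          funext μ; rw [neg_sq]
        rw [he]; exact hg'2
      · intro v v' hv
        have h := hweak v v' hv
        have e1 : (∫ μ in Set.Ioo (-1:ℝ) 1, Real.exp (σ μ / d) * (1 - μ ^ 2) * (-g' μ) * v' μ)
            = -∫ μ in Set.Ioo (-1:ℝ) 1, Real.exp (σ μ / d) * (1 - μ ^ 2) * g' μ * v' μ := by
          rw [← integral_neg]; congr 1; funext μ; ring
        have e2 : (∫ μ in Set.Ioo (-1:ℝ) 1, α μ * (-g μ) * v μ / (1 - μ ^ 2))
            = -∫ μ in Set.Ioo (-1:ℝ) 1, α μ * g μ * v μ / (1 - μ ^ 2) := by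
          rw [← integral_neg]; congr 1; funext μ; ring
        have e3 : (∫ μ in Set.Ioo (-1:ℝ) 1, (-f μ) * v μ / (1 - μ ^ 2))
            = -∫ μ in Set.Ioo (-1:ℝ) 1, f μ * v μ / (1 - μ ^ 2) := by
          rw [← integral_neg]; congr 1; funext μ; ring
        rw [e1, e2, e3]; linarith
    have := key_max_principle σ d α₀ hα₀ α hα_meas hα_bdd (fun μ => -f μ)
      (fun μ => -g μ) (fun μ => -g' μ) hneg hα_lb
      (by filter_upwards [hge] with μ h; linarith)
    filter_upwards [this] with μ h
    simpa using h
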